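/- Let α₁,…,αₙ ∈ ℝ be distinct, and let b, c ∈ ℝ each be distinct from all αⱼ. Set Bⱼ = (b−αⱼ)/(c−αⱼ) and let A ∈ ℝ. Then the function τ on ℤⁿ defined by τ(σ) = 1 + A·B₁^{σ₁}⋯Bₙ^{σₙ} satisfies the Hirota bilinear difference equation: for all σ ∈ ℤⁿ and distinct indices i, j, k, (αᵢ−αⱼ)·τ(σ+eₖ)·τ(σ+eᵢ+eⱼ) + (αⱼ−αₖ)·τ(σ+eᵢ)·τ(σ+eⱼ+eₖ) + (αₖ−αᵢ)·τ(σ+eⱼ)·τ(σ+eᵢ+eₖ) = 0. -/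
import Mathlib

private lemma one_soliton_BHZ_aux (x y z b c A P : ℝ)
    (hx : c - x ≠ 0) (hy : c - y ≠ 0) (hz : c - z ≠ 0) :
    (x - y) * (1 + A * ((b - z)/(c - z) * P)) * (1 + A * ((b - y)/(c - y) * ((b - x)/(c - x) * P)))
  + (y - z) * (1 + A * ((b - x)/(c - x) * P)) * (1 + A * ((b - z)/(c - z) * ((b - y)/(c - y) * P)))
  + (z - x) * (1 + A * ((b - y)/(c - y) * P)) * (1 + A * ((b - z)/(c - z) * ((b - x)/(c - x) * P))) = 0 := by
  field_simp
  ring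


/-- The 1-soliton ansatz `τ(σ) = 1 + A·∏ⱼ Bⱼ^{σⱼ}` with
`Bⱼ = (b-αⱼ)/(c-αⱼ)` satisfies the Hirota bilinear difference equation
(the BHZ relation) for all `σ ∈ ℤⁿ` and distinct indices `i, j, k`. -/
theorem one_soliton_BHZ (n : ℕ) (α : Fin n → ℝ) (hα : Function.Injective α)
    (b c A : ℝ) (hb : ∀ j, b ≠ α j) (hc : ∀ j, c ≠ α j)
    (B : Fin n → ℝ) (hB : ∀ j, B j = (b - α j) / (c - α j))
    (τ : (Fin n → ℤ) → ℝ) (hτ : ∀ σ, τ σ = 1 + A * ∏ l, B l ^ σ l)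
    (σ : Fin n → ℤ) (i j k : Fin n) (hij : i ≠ j) (hjk : j ≠ k) (hik : i ≠ k) :
    (α i - α j) * τ (σ + Pi.single k 1) * τ (σ + Pi.single i 1 + Pi.single j 1)
      + (α j - α k) * τ (σ + Pi.single i 1) * τ (σ + Pi.single j 1 + Pi.single k 1)
      + (α k - α i) * τ (σ + Pi.single j 1) * τ (σ + Pi.single i 1 + Pi.single k 1) = 0 := by
  have hbne : ∀ l, b - α l ≠ 0 := fun l => sub_ne_zero.mpr (hb l)
  have hcne : ∀ l, c - α l ≠ 0 := fun l => sub_ne_zero.mpr (hc l)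
  have hBne : ∀ l, B l ≠ 0 := fun l => by rw [hB l]; exact div_ne_zero (hbne l) (hcne l)
  have key : ∀ (σ' : Fin n → ℤ) (m : Fin n),
      (∏ l, B l ^ ((σ' + Pi.single m 1 : Fin n → ℤ) l)) = B m * ∏ l, B l ^ σ' l := by
    intro σ' m
    have h1 : (∏ l, B l ^ ((σ' + Pi.single m 1 : Fin n → ℤ) l)) =
        (∏ l, B l ^ σ' l) * ∏ l, B l ^ ((Pi.single m 1 : Fin n → ℤ) l) := by
      rw [← Finset.prod_mul_distrib]
      refine Finset.prod_congr rfl fun l _ => ?_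
      rw [Pi.add_apply, zpow_add₀ (hBne l)]
    have h2 : (∏ l, B l ^ ((Pi.single m 1 : Fin n → ℤ) l)) = B m := by
      rw [Finset.prod_eq_single m]
      · simp
      · intro l _ hl; simp [Pi.single_eq_of_ne hl]
      · simp
    rw [h1, h2]; ring
  simp only [hτ, key]
  rw [hB i, hB j, hB k]
  exact one_soliton_BHZ_aux (α i) (α j) (α k) b c A (∏ l, B l ^ σ l)
    (hcne i) (hcne j) (hcne k)
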